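/- The Hamiltonian H(x,m,t,p,q) = min_{b∈B̃} max_{a∈A} { −f(x,a)·p + ⟨q, div(bm)⟩_{L^2} − ℓ(x,m,t,a,b) } satisfies, for q = 2(m₁−m₂)/ξ², the key comparison estimate |H(x₁,m₁,t₁,p,q) − H(x₂,m₂,t₂,p,q)| ≤ L‖x₁−x₂‖·‖p‖ + M·‖m₁−m₂‖²_{L²(Ω₁(T))}/ξ² + ω_ℓ(‖x₁−x₂‖ + ‖m₁−m₂‖_{H¹(Ω₁(T))} + |t₁−t₂|). -/

import Mathlib

open Set MeasureTheory

noncomputable section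

/-- the divergence `div(b·m)(y) = trace (D_y (m(y) b(y)))`. -/
def divbm (d : ℕ) (b : EuclideanSpace ℝ (Fin d) → EuclideanSpace ℝ (Fin d))
    (m : EuclideanSpace ℝ (Fin d) → ℝ) (y : EuclideanSpace ℝ (Fin d)) : ℝ :=
  LinearMap.trace ℝ (EuclideanSpace ℝ (Fin d))
    (fderiv ℝ (fun z => m z • b z) y).toLinearMap

/-- the `H¹` expression `‖m₁ − m₂‖_{H¹}` used in the modulus of continuity. -/
def H1dist (d : ℕ) (m₁ m₂ : EuclideanSpace ℝ (Fin d) → ℝ) : ℝ :=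
  Real.sqrt (∫ y, ((m₁ y - m₂ y) ^ 2 +
    ‖fderiv ℝ (fun z => m₁ z - m₂ z) y‖ ^ 2))

/-- the admissible fields `b ∈ B̃`: `C¹`, `‖b‖_∞ ≤ M` and `‖div b‖_∞ ≤ M`. -/
def Bset (d : ℕ) (M : ℝ) : Set (EuclideanSpace ℝ (Fin d) → EuclideanSpace ℝ (Fin d)) :=
  {b | ContDiff ℝ 1 b ∧ (∀ y, ‖b y‖ ≤ M) ∧
    ∀ y, |LinearMap.trace ℝ (EuclideanSpace ℝ (Fin d))
      (fderiv ℝ b y).toLinearMap| ≤ M}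

/-- the Hamiltonian
`H(x,m,t,p,q) = min_{b∈B̃} max_{a∈A} { −f(x,a)·p + ⟨q, div(bm)⟩_{L²} − ℓ(x,m,t,a,b) }`. -/
def Ham (d k : ℕ) (M : ℝ) (A : Set (EuclideanSpace ℝ (Fin k)))
    (f : EuclideanSpace ℝ (Fin d) → EuclideanSpace ℝ (Fin k) → EuclideanSpace ℝ (Fin d))
    (ℓ : EuclideanSpace ℝ (Fin d) → (EuclideanSpace ℝ (Fin d) → ℝ) → ℝ →
      EuclideanSpace ℝ (Fin k) →
      (EuclideanSpace ℝ (Fin d) → EuclideanSpace ℝ (Fin d)) → ℝ)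
    (x : EuclideanSpace ℝ (Fin d)) (m : EuclideanSpace ℝ (Fin d) → ℝ) (t : ℝ)
    (p : EuclideanSpace ℝ (Fin d)) (q : EuclideanSpace ℝ (Fin d) → ℝ) : ℝ :=
  ⨅ b : ↥(Bset d M), ⨆ a : ↥A,
    (-(inner ℝ (f x a.1) p : ℝ) + (∫ y, q y * divbm d b.1 m y) - ℓ x m t a.1 b.1)

section Aux

lemma hasCompactSupport_sub {X : Type*} [TopologicalSpace X] [T2Space X] {f g : X → ℝ}
    (hf : HasCompactSupport f) (hg : HasCompactSupport g) :
    HasCompactSupport (fun x => f x - g x) := by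
  refine HasCompactSupport.of_support_subset_isCompact (hf.isCompact.union hg.isCompact) ?_
  intro y hy
  simp only [Function.mem_support] at hy
  by_contra hcon
  simp only [Set.mem_union, not_or] at hcon
  have h1 : f y = 0 := image_eq_zero_of_notMem_tsupport hcon.1
  have h2 : g y = 0 := image_eq_zero_of_notMem_tsupport hcon.2
  simp [h1, h2] at hy

lemma abs_ciInf_sub_ciInf_le {ι : Sort*} [Nonempty ι] {f g : ι → ℝ} {C : ℝ}
    (hC : 0 ≤ C) (h : ∀ i, |f i - g i| ≤ C) : |(⨅ i, f i) - ⨅ i, g i| ≤ C := by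
  by_cases hb : BddBelow (Set.range f)
  · have hb' : BddBelow (Set.range g) := by
      obtain ⟨c, hc⟩ := hb
      refine ⟨c - C, ?_⟩
      rintro _ ⟨i, rfl⟩
      have h1 := (abs_le.1 (h i)).2
      have h2 : c ≤ f i := hc ⟨i, rfl⟩
      linarith
    rw [abs_le]
    constructor
    · have hstep : ∀ i, (⨅ j, g j) - C ≤ f i := fun i => by
        have h2 := ciInf_le hb' i
        have h1 := (abs_le.1 (h i)).1
        linarith
      have := le_ciInf hstep
      linarith
    · have hstep : ∀ i, (⨅ j, f j) - C ≤ g i := fun i => by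
        have h2 := ciInf_le hb i
        have h1 := (abs_le.1 (h i)).2
        linarith
      have := le_ciInf hstep
      linarith
  · have hb' : ¬ BddBelow (Set.range g) := by
      intro hg
      apply hb
      obtain ⟨c, hc⟩ := hg
      refine ⟨c - C, ?_⟩
      rintro _ ⟨i, rfl⟩
      have h1 := (abs_le.1 (h i)).1
      have h2 : c ≤ g i := hc ⟨i, rfl⟩
      linarith
    rw [Real.iInf_of_not_bddBelow hb, Real.iInf_of_not_bddBelow hb']
    simpa using hC

lemma abs_ciSup_sub_ciSup_le {ι : Sort*} [Nonempty ι] {f g : ι → ℝ} {C : ℝ}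
    (hC : 0 ≤ C) (h : ∀ i, |f i - g i| ≤ C) : |(⨆ i, f i) - ⨆ i, g i| ≤ C := by
  by_cases hb : BddAbove (Set.range f)
  · have hb' : BddAbove (Set.range g) := by
      obtain ⟨c, hc⟩ := hb
      refine ⟨c + C, ?_⟩
      rintro _ ⟨i, rfl⟩
      have h1 := (abs_le.1 (h i)).1
      have h2 : f i ≤ c := hc ⟨i, rfl⟩
      linarith
    rw [abs_le]
    constructor
    · have hstep : ∀ i, g i ≤ (⨆ j, f j) + C := fun i => by
        have h2 := le_ciSup hb i
        have h1 := (abs_le.1 (h i)).1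
        linarith
      have := ciSup_le hstep
      linarith
    · have hstep : ∀ i, f i ≤ (⨆ j, g j) + C := fun i => by
        have h2 := le_ciSup hb' i
        have h1 := (abs_le.1 (h i)).2
        linarith
      have := ciSup_le hstep
      linarith
  · have hb' : ¬ BddAbove (Set.range g) := by
      intro hg
      apply hb
      obtain ⟨c, hc⟩ := hg
      refine ⟨c + C, ?_⟩
      rintro _ ⟨i, rfl⟩
      have h1 := (abs_le.1 (h i)).2
      have h2 : g i ≤ c := hc ⟨i, rfl⟩
      linarith
    rw [Real.iSup_of_not_bddAbove hb, Real.iSup_of_not_bddAbove hb']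
    simpa using hC

variable {d : ℕ}

local notation "E" => EuclideanSpace ℝ (Fin d)

lemma cont_trace : Continuous fun T : E →L[ℝ] E =>
    LinearMap.trace ℝ E (ContinuousLinearMap.toLinearMap T) :=
  LinearMap.continuous_of_finiteDimensional
    ((LinearMap.trace ℝ E).comp (ContinuousLinearMap.coeLM ℝ))

lemma trace_smulRight' (f : E →L[ℝ] ℝ) (w : E) :
    LinearMap.trace ℝ E ((f.smulRight w).toLinearMap) = f w := by
  have h : ((f.smulRight w).toLinearMap)
      = dualTensorHom ℝ E E (f.toLinearMap ⊗ₜ w) := by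
    ext z
    simp [dualTensorHom_apply]
  rw [h, LinearMap.trace_eq_contract_apply, contractLeft_apply]; rfl

lemma trace_eq_sum (T : E →L[ℝ] E) :
    LinearMap.trace ℝ E T.toLinearMap
      = ∑ i, T (EuclideanSpace.single i 1) i := by
  classical
  rw [LinearMap.trace_eq_matrix_trace ℝ ((EuclideanSpace.basisFun (Fin d) ℝ).toBasis)]
  simp [Matrix.trace, LinearMap.toMatrix_apply, Matrix.diag,
    EuclideanSpace.basisFun_apply, EuclideanSpace.basisFun_repr]

lemma integral_trace_fderiv (v : E → E) (hv : ContDiff ℝ 1 v)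
    (hc : HasCompactSupport v) :
    ∫ y, LinearMap.trace ℝ E (fderiv ℝ v y).toLinearMap = 0 := by
  have hd : Differentiable ℝ v := hv.differentiable one_ne_zero
  have hcont : Continuous fun y => fderiv ℝ v y := hv.continuous_fderiv one_ne_zero
  have hint : ∀ i : Fin d, Integrable (fun y => fderiv ℝ v y (EuclideanSpace.single i 1) i) := by
    intro i
    refine Continuous.integrable_of_hasCompactSupport ?_ ?_
    · exact (continuous_apply i).comp
        ((PiLp.continuous_ofLp 2 _).comp
          ((ContinuousLinearMap.apply ℝ E (EuclideanSpace.single i 1)).continuous.comp hcont))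
    · exact (hc.fderiv (𝕜 := ℝ)).comp_left
        (g := fun T : E →L[ℝ] E => T (EuclideanSpace.single i 1) i) rfl
  calc ∫ y, LinearMap.trace ℝ E (fderiv ℝ v y).toLinearMap
      = ∫ y, ∑ i, fderiv ℝ v y (EuclideanSpace.single i 1) i := by
        simp_rw [trace_eq_sum]
    _ = ∑ i, ∫ y, fderiv ℝ v y (EuclideanSpace.single i 1) i := by
        rw [integral_finset_sum _ (fun i _ => hint i)]
    _ = 0 := by
        refine Finset.sum_eq_zero fun i _ => ?_
        set g : E → ℝ := fun y => v y i with hg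
        have hgdiff : Differentiable ℝ g := fun y =>
          ((EuclideanSpace.proj (𝕜 := ℝ) i).differentiableAt).comp y (hd y)
        have hfd : ∀ y, fderiv ℝ g y = (EuclideanSpace.proj (𝕜 := ℝ) i).comp (fderiv ℝ v y) :=
          fun y => ((EuclideanSpace.proj (𝕜 := ℝ) i).hasFDerivAt.comp y (hd y).hasFDerivAt).fderiv
        have hgc : HasCompactSupport g := hc.comp_left (g := fun w : E => w i) rfl
        have hgint : Integrable g := hgdiff.continuous.integrable_of_hasCompactSupport hgc
        have hgint' : Integrable (fun y => fderiv ℝ g y (EuclideanSpace.single i 1)) := by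
          simp_rw [hfd]
          exact (hint i).congr (by simp)
        have h0 := integral_mul_fderiv_eq_neg_fderiv_mul_of_integrable
          (μ := (volume : Measure E)) (f := fun _ : E => (1:ℝ)) (g := g)
          (v := EuclideanSpace.single i 1)
          (by simp [fderiv_fun_const]) (by simpa using hgint') (by simpa using hgint)
          (fun x _ => differentiableAt_const (1:ℝ)) (fun x _ => hgdiff x)
        simp only [one_mul, fderiv_fun_const] at h0
        have h0' : ∫ y, fderiv ℝ g y (EuclideanSpace.single i 1) = 0 := by
          simpa using h0
        rw [← h0']
        congr 1
        funext y
        rw [hfd y]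
        rfl

/-- divergence of a smul product. -/
lemma divbm_eq (b : E → E) (hb : ContDiff ℝ 1 b) (m : E → ℝ) (hm : ContDiff ℝ 1 m)
    (y : E) :
    divbm d b m y = fderiv ℝ m y (b y)
      + m y * LinearMap.trace ℝ E (fderiv ℝ b y).toLinearMap := by
  unfold divbm
  rw [fderiv_fun_smul ((hm.differentiable one_ne_zero) y) ((hb.differentiable one_ne_zero) y)]
  have : ((m y • fderiv ℝ b y + (fderiv ℝ m y).smulRight (b y)).toLinearMap)
      = m y • (fderiv ℝ b y).toLinearMap + ((fderiv ℝ m y).smulRight (b y)).toLinearMap := by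
    ext z; simp
  rw [this, map_add, _root_.map_smul, trace_smulRight', smul_eq_mul]
  ring

lemma divbm_sub (b : E → E) (hb : ContDiff ℝ 1 b) (m₁ m₂ : E → ℝ)
    (hm₁ : ContDiff ℝ 1 m₁) (hm₂ : ContDiff ℝ 1 m₂) (y : E) :
    divbm d b m₁ y - divbm d b m₂ y = divbm d b (fun z => m₁ z - m₂ z) y := by
  rw [divbm_eq b hb m₁ hm₁ y, divbm_eq b hb m₂ hm₂ y,
    divbm_eq b hb _ (hm₁.sub hm₂) y]
  rw [fderiv_fun_sub ((hm₁.differentiable one_ne_zero) y) ((hm₂.differentiable one_ne_zero) y)]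
  simp
  ring

/-- key integration by parts: `∫ 2u·div(bu) = ∫ u² div b`. -/
lemma key_ibp (b : E → E) (hb : ContDiff ℝ 1 b) (u : E → ℝ)
    (hu : ContDiff ℝ 1 u) (huc : HasCompactSupport u) :
    ∫ y, 2 * u y * divbm d b u y
      = ∫ y, u y ^ 2 * LinearMap.trace ℝ E (fderiv ℝ b y).toLinearMap := by
  have hdu : Differentiable ℝ u := hu.differentiable one_ne_zero
  have hdb : Differentiable ℝ b := hb.differentiable one_ne_zero
  set divb : E → ℝ := fun y => LinearMap.trace ℝ E (fderiv ℝ b y).toLinearMap with hdivb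
  have hdivbc : Continuous divb := cont_trace.comp (hb.continuous_fderiv one_ne_zero)
  set v : E → E := fun y => (u y * u y) • b y with hv
  have hvC : ContDiff ℝ 1 v := (hu.mul hu).smul hb
  have hvc : HasCompactSupport v := (huc.mul_right).smul_right
  have hptv : ∀ y, LinearMap.trace ℝ E (fderiv ℝ v y).toLinearMap
      = 2 * u y * (fderiv ℝ u y (b y)) + (u y * u y) * divb y := by
    intro y
    have h1 : fderiv ℝ v y = (u y * u y) • fderiv ℝ b y
        + (fderiv ℝ (fun z => u z * u z) y).smulRight (b y) :=
      fderiv_fun_smul ((hdu y).mul (hdu y)) (hdb y)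
    have h2 : fderiv ℝ (fun z => u z * u z) y = u y • fderiv ℝ u y + u y • fderiv ℝ u y :=
      fderiv_fun_mul (hdu y) (hdu y)
    have h3 : ((((u y * u y) • fderiv ℝ b y)
        + (fderiv ℝ (fun z => u z * u z) y).smulRight (b y)).toLinearMap)
        = (u y * u y) • (fderiv ℝ b y).toLinearMap
          + ((fderiv ℝ (fun z => u z * u z) y).smulRight (b y)).toLinearMap := by
      ext z; simp
    rw [h1, h3, map_add, _root_.map_smul, trace_smulRight', h2]
    simp [smul_eq_mul]
    ring
  have hptu : ∀ y, divbm d b u y = fderiv ℝ u y (b y) + u y * divb y :=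
    divbm_eq b hb u hu
  have hint2 : Integrable (fun y => (u y * u y) * divb y) := by
    refine Continuous.integrable_of_hasCompactSupport
      (((hu.continuous.mul hu.continuous).mul hdivbc)) ?_
    exact (huc.mul_right).mul_right
  have hint1 : Integrable (fun y => LinearMap.trace ℝ E (fderiv ℝ v y).toLinearMap) := by
    refine Continuous.integrable_of_hasCompactSupport
      (cont_trace.comp (hvC.continuous_fderiv one_ne_zero)) ?_
    exact (hvc.fderiv (𝕜 := ℝ)).comp_left
      (g := fun T : E →L[ℝ] E => LinearMap.trace ℝ E T.toLinearMap) (by simp)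
  calc ∫ y, 2 * u y * divbm d b u y
      = ∫ y, (LinearMap.trace ℝ E (fderiv ℝ v y).toLinearMap + (u y * u y) * divb y) := by
        congr 1; funext y; rw [hptu y, hptv y]; ring
    _ = (∫ y, LinearMap.trace ℝ E (fderiv ℝ v y).toLinearMap) + ∫ y, (u y * u y) * divb y :=
        integral_add hint1 hint2
    _ = ∫ y, u y ^ 2 * divb y := by
        rw [integral_trace_fderiv v hvC hvc, zero_add]
        congr 1; funext y; ring

/-- the main integral estimate for the `q` term. -/
lemma Idiff_bound {M ξ : ℝ} (hM : 0 < M) (hξ : ξ ≠ 0) (b : E → E)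
    (hb1 : ContDiff ℝ 1 b)
    (hb3 : ∀ y, |LinearMap.trace ℝ E (fderiv ℝ b y).toLinearMap| ≤ M)
    (m₁ m₂ : E → ℝ) (hm₁ : ContDiff ℝ 1 m₁) (hm₂ : ContDiff ℝ 1 m₂)
    (hm₁c : HasCompactSupport m₁) (hm₂c : HasCompactSupport m₂) :
    |(∫ y, 2 * (m₁ y - m₂ y) / ξ ^ 2 * divbm d b m₁ y)
        - ∫ y, 2 * (m₁ y - m₂ y) / ξ ^ 2 * divbm d b m₂ y|
      ≤ M * (∫ y, (m₁ y - m₂ y) ^ 2) / ξ ^ 2 := by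
  have hξ2 : (0:ℝ) < ξ ^ 2 := by positivity
  set u : E → ℝ := fun y => m₁ y - m₂ y with hu_def
  have hu : ContDiff ℝ 1 u := hm₁.sub hm₂
  have huc : HasCompactSupport u := hasCompactSupport_sub hm₁c hm₂c
  set divb : E → ℝ := fun y => LinearMap.trace ℝ E (fderiv ℝ b y).toLinearMap with hdivb
  have hdivbc : Continuous divb := cont_trace.comp (hb1.continuous_fderiv one_ne_zero)
  have hu2c : HasCompactSupport (fun y => u y ^ 2) := by
    have h : (fun y => u y ^ 2) = (fun y => u y * u y) := by funext y; ring
    rw [h]; exact huc.mul_right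
  have hq_cont : Continuous fun y => 2 * (m₁ y - m₂ y) / ξ ^ 2 :=
    (continuous_const.mul (hm₁.continuous.sub hm₂.continuous)).div_const _
  have hqc : HasCompactSupport fun y => 2 * (m₁ y - m₂ y) / ξ ^ 2 := by
    have h : (fun y => 2 * (m₁ y - m₂ y) / ξ ^ 2) = fun y => (2 / ξ ^ 2) * u y := by
      funext y; simp only [hu_def]; ring
    rw [h]; exact huc.mul_left
  have hcont_dm : ∀ m : E → ℝ, ContDiff ℝ 1 m → Continuous (divbm d b m) := by
    intro m hm
    have : Continuous fun y => LinearMap.trace ℝ E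
        (fderiv ℝ (fun z => m z • b z) y).toLinearMap :=
      cont_trace.comp ((hm.smul hb1).continuous_fderiv one_ne_zero)
    exact this
  have hint₁ : Integrable fun y => 2 * (m₁ y - m₂ y) / ξ ^ 2 * divbm d b m₁ y :=
    (hq_cont.mul (hcont_dm m₁ hm₁)).integrable_of_hasCompactSupport hqc.mul_right
  have hint₂ : Integrable fun y => 2 * (m₁ y - m₂ y) / ξ ^ 2 * divbm d b m₂ y :=
    (hq_cont.mul (hcont_dm m₂ hm₂)).integrable_of_hasCompactSupport hqc.mul_right
  have hIdiff : (∫ y, 2 * (m₁ y - m₂ y) / ξ ^ 2 * divbm d b m₁ y)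
      - (∫ y, 2 * (m₁ y - m₂ y) / ξ ^ 2 * divbm d b m₂ y)
      = (ξ ^ 2)⁻¹ * ∫ y, u y ^ 2 * divb y := by
    rw [← integral_sub hint₁ hint₂]
    have hpt : ∀ y, 2 * (m₁ y - m₂ y) / ξ ^ 2 * divbm d b m₁ y
        - 2 * (m₁ y - m₂ y) / ξ ^ 2 * divbm d b m₂ y
        = (ξ ^ 2)⁻¹ * (2 * u y * divbm d b u y) := by
      intro y
      rw [← mul_sub, divbm_sub b hb1 m₁ m₂ hm₁ hm₂ y]
      have hx : divbm d b (fun z => m₁ z - m₂ z) y = divbm d b u y := rfl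
      rw [hx]
      field_simp
      exact mul_comm _ _
    simp_rw [hpt]
    rw [integral_const_mul, key_ibp b hb1 u hu huc]
  rw [hIdiff]
  have hint3 : Integrable (fun y => u y ^ 2 * divb y) :=
    ((hu.continuous.pow 2).mul hdivbc).integrable_of_hasCompactSupport hu2c.mul_right
  have hintM : Integrable (fun y => u y ^ 2 * M) :=
    ((hu.continuous.pow 2).mul continuous_const).integrable_of_hasCompactSupport hu2c.mul_right
  have habs : |∫ y, u y ^ 2 * divb y| ≤ ∫ y, u y ^ 2 * M := by
    have h1 : |∫ y, u y ^ 2 * divb y| ≤ ∫ y, |u y ^ 2 * divb y| := by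
      simpa only [Real.norm_eq_abs] using
        norm_integral_le_integral_norm (μ := volume) (fun y => u y ^ 2 * divb y)
    refine h1.trans (integral_mono hint3.abs hintM fun y => ?_)
    rw [abs_mul, abs_of_nonneg (sq_nonneg (u y))]
    exact mul_le_mul_of_nonneg_left (hb3 y) (sq_nonneg (u y))
  have hIeq : ∫ y, u y ^ 2 * M = (∫ y, u y ^ 2) * M := integral_mul_const _ _
  rw [abs_mul, abs_of_nonneg (le_of_lt (by positivity : (0:ℝ) < (ξ ^ 2)⁻¹))]
  calc (ξ ^ 2)⁻¹ * |∫ y, u y ^ 2 * divb y|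
      ≤ (ξ ^ 2)⁻¹ * ((∫ y, u y ^ 2) * M) := by
        rw [← hIeq]
        exact mul_le_mul_of_nonneg_left habs (by positivity)
    _ = M * (∫ y, u y ^ 2) / ξ ^ 2 := by ring
    _ = M * (∫ y, (m₁ y - m₂ y) ^ 2) / ξ ^ 2 := by simp only [hu_def]

end Aux

theorem stmt_15 (d k : ℕ) (M L ξ : ℝ) (hM : 0 < M) (hL : 0 < L) (hξ : ξ ≠ 0)
    (A : Set (EuclideanSpace ℝ (Fin k))) (hA : IsCompact A) (hAne : A.Nonempty)
    (f : EuclideanSpace ℝ (Fin d) → EuclideanSpace ℝ (Fin k) → EuclideanSpace ℝ (Fin d))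
    (hf : ∀ a ∈ A, ∀ x z, ‖f x a - f z a‖ ≤ L * ‖x - z‖)
    (ℓ : EuclideanSpace ℝ (Fin d) → (EuclideanSpace ℝ (Fin d) → ℝ) → ℝ →
      EuclideanSpace ℝ (Fin k) →
      (EuclideanSpace ℝ (Fin d) → EuclideanSpace ℝ (Fin d)) → ℝ)
    (ωℓ : ℝ → ℝ) (hωℓmono : Monotone ωℓ)
    (hωℓ : ∀ (x₁ x₂ : EuclideanSpace ℝ (Fin d))
      (m₁ m₂ : EuclideanSpace ℝ (Fin d) → ℝ) (t₁ t₂ : ℝ) a b,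
      |ℓ x₁ m₁ t₁ a b - ℓ x₂ m₂ t₂ a b| ≤
        ωℓ (‖x₁ - x₂‖ + H1dist d m₁ m₂ + |t₁ - t₂|))
    (m₁ m₂ : EuclideanSpace ℝ (Fin d) → ℝ)
    (hm₁ : ContDiff ℝ 1 m₁) (hm₂ : ContDiff ℝ 1 m₂)
    (hm₁c : HasCompactSupport m₁) (hm₂c : HasCompactSupport m₂)
    (x₁ x₂ : EuclideanSpace ℝ (Fin d)) (t₁ t₂ : ℝ) (p : EuclideanSpace ℝ (Fin d)) :
    |Ham d k M A f ℓ x₁ m₁ t₁ p (fun y => 2 * (m₁ y - m₂ y) / ξ ^ 2) -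
        Ham d k M A f ℓ x₂ m₂ t₂ p (fun y => 2 * (m₁ y - m₂ y) / ξ ^ 2)| ≤
      L * ‖x₁ - x₂‖ * ‖p‖ + M * (∫ y, (m₁ y - m₂ y) ^ 2) / ξ ^ 2 +
        ωℓ (‖x₁ - x₂‖ + H1dist d m₁ m₂ + |t₁ - t₂|) := by
  classical
  have hξ2 : (0:ℝ) < ξ ^ 2 := by positivity
  -- nonnegativity of the three constants
  have hC₁ : 0 ≤ L * ‖x₁ - x₂‖ * ‖p‖ := by positivity
  have hIu : 0 ≤ ∫ y, (m₁ y - m₂ y) ^ 2 :=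
    integral_nonneg fun y => sq_nonneg _
  have hC₂ : 0 ≤ M * (∫ y, (m₁ y - m₂ y) ^ 2) / ξ ^ 2 :=
    div_nonneg (mul_nonneg hM.le hIu) hξ2.le
  obtain ⟨a₀, ha₀⟩ := hAne
  have hH0 : H1dist d m₁ m₁ = 0 := by
    unfold H1dist
    have h1 : (fun z => m₁ z - m₁ z) = fun _ : EuclideanSpace ℝ (Fin d) => (0:ℝ) := by
      funext z; ring
    rw [h1]
    simp
  have hC₃0 : 0 ≤ ωℓ 0 := by
    have h00 := hωℓ x₁ x₁ m₁ m₁ t₁ t₁ a₀ (fun _ => 0)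
    simpa [hH0] using h00
  have hargnn : (0:ℝ) ≤ ‖x₁ - x₂‖ + H1dist d m₁ m₂ + |t₁ - t₂| := by
    have := Real.sqrt_nonneg (∫ y, ((m₁ y - m₂ y) ^ 2 +
      ‖fderiv ℝ (fun z => m₁ z - m₂ z) y‖ ^ 2))
    unfold H1dist
    positivity
  have hC₃ : 0 ≤ ωℓ (‖x₁ - x₂‖ + H1dist d m₁ m₂ + |t₁ - t₂|) :=
    hC₃0.trans (hωℓmono hargnn)
  have hC : 0 ≤ L * ‖x₁ - x₂‖ * ‖p‖ + M * (∫ y, (m₁ y - m₂ y) ^ 2) / ξ ^ 2 +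
      ωℓ (‖x₁ - x₂‖ + H1dist d m₁ m₂ + |t₁ - t₂|) := by linarith
  -- nonemptiness of the index types
  have hb0 : (fun _ : EuclideanSpace ℝ (Fin d) => (0 : EuclideanSpace ℝ (Fin d))) ∈ Bset d M := by
    refine ⟨contDiff_const, fun y => by simp [hM.le], fun y => ?_⟩
    rw [fderiv_fun_const]
    simpa using hM.le
  haveI : Nonempty ↥(Bset d M) := ⟨⟨_, hb0⟩⟩
  haveI : Nonempty ↥A := ⟨⟨a₀, ha₀⟩⟩
  unfold Ham
  refine abs_ciInf_sub_ciInf_le hC fun b => abs_ciSup_sub_ciSup_le hC fun a => ?_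
  obtain ⟨b, hb1, hb2, hb3⟩ := b
  obtain ⟨a, haA⟩ := a
  simp only
  -- the three pieces
  have hfb : |(inner ℝ (f x₁ a) p : ℝ) - inner ℝ (f x₂ a) p| ≤ L * ‖x₁ - x₂‖ * ‖p‖ := by
    rw [← inner_sub_left]
    calc |(inner ℝ (f x₁ a - f x₂ a) p : ℝ)|
        ≤ ‖f x₁ a - f x₂ a‖ * ‖p‖ := abs_real_inner_le_norm _ _
      _ ≤ L * ‖x₁ - x₂‖ * ‖p‖ :=
          mul_le_mul_of_nonneg_right (hf a haA x₁ x₂) (norm_nonneg p)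
  have hIb : |(∫ y, 2 * (m₁ y - m₂ y) / ξ ^ 2 * divbm d b m₁ y)
      - ∫ y, 2 * (m₁ y - m₂ y) / ξ ^ 2 * divbm d b m₂ y|
      ≤ M * (∫ y, (m₁ y - m₂ y) ^ 2) / ξ ^ 2 :=
    Idiff_bound hM hξ b hb1 hb3 m₁ m₂ hm₁ hm₂ hm₁c hm₂c
  have hlb : |ℓ x₁ m₁ t₁ a b - ℓ x₂ m₂ t₂ a b|
      ≤ ωℓ (‖x₁ - x₂‖ + H1dist d m₁ m₂ + |t₁ - t₂|) := hωℓ x₁ x₂ m₁ m₂ t₁ t₂ a b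
  set i₁ : ℝ := inner ℝ (f x₁ a) p
  set i₂ : ℝ := inner ℝ (f x₂ a) p
  set I₁ : ℝ := ∫ y, 2 * (m₁ y - m₂ y) / ξ ^ 2 * divbm d b m₁ y
  set I₂ : ℝ := ∫ y, 2 * (m₁ y - m₂ y) / ξ ^ 2 * divbm d b m₂ y
  set l₁ : ℝ := ℓ x₁ m₁ t₁ a b
  set l₂ : ℝ := ℓ x₂ m₂ t₂ a b
  have hD : (-i₁ + I₁ - l₁) - (-i₂ + I₂ - l₂)
      = -(i₁ - i₂) + (I₁ - I₂) + -(l₁ - l₂) := by ring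
  rw [hD]
  calc |(-(i₁ - i₂) + (I₁ - I₂) + -(l₁ - l₂))|
      ≤ |(-(i₁ - i₂))| + |I₁ - I₂| + |(-(l₁ - l₂))| := abs_add_three _ _ _
    _ = |i₁ - i₂| + |I₁ - I₂| + |l₁ - l₂| := by rw [abs_neg, abs_neg]
    _ ≤ L * ‖x₁ - x₂‖ * ‖p‖ + M * (∫ y, (m₁ y - m₂ y) ^ 2) / ξ ^ 2 +
        ωℓ (‖x₁ - x₂‖ + H1dist d m₁ m₂ + |t₁ - t₂|) :=
        add_le_add (add_le_add hfb hIb) hlb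

end
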